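/- Let g : ℝ² → ℝ be a C³ function vanishing outside the open square (−M,M)², and let p₀ be a polynomial with |p₀(x,y) − ∂x∂y∂y g(x,y)| < ε for all (x,y) ∈ [−M,M]². Define p(x,y) = ∫_{−M}^{x} ∫_{−M}^{y} ∫_{−M}^{y} p₀(u,v) dv dv du. Then for all (x,y) ∈ [−M,M]², the second partial derivative of p with respect to y satisfies |∂y² p(x,y) − ∂y² g(x,y)| ≤ 2Mε. -/

import Mathlib

open MeasureTheory intervalIntegral

private lemma swap_cont {F : ℝ × ℝ → ℝ} (hF : Continuous F) (a b c d : ℝ) :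
    (∫ u in a..b, ∫ t in c..d, F (u, t)) = ∫ t in c..d, ∫ u in a..b, F (u, t) := by
  have key : (∫ u in Set.uIoc a b, ∫ t in Set.uIoc c d, F (u, t))
      = ∫ t in Set.uIoc c d, ∫ u in Set.uIoc a b, F (u, t) := by
    apply MeasureTheory.integral_integral_swap
    rw [Measure.prod_restrict]
    apply (hF.continuousOn.integrableOn_compact
      ((isCompact_uIcc).prod isCompact_uIcc)).mono_set
    exact Set.prod_mono Set.uIoc_subset_uIcc Set.uIoc_subset_uIcc
  simp_rw [intervalIntegral_eq_integral_uIoc, MeasureTheory.integral_smul, key]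
  rw [smul_comm]

private lemma contK {f : ℝ × ℝ → ℝ} (hf : Continuous f) (a : ℝ) :
    Continuous fun q : ℝ × ℝ => ∫ v in a..q.2, f (q.1, v) :=
  continuous_parametric_intervalIntegral_of_continuous
    (f := fun (p : ℝ × ℝ) (v : ℝ) => f (p.1, v))
    (hf.comp ((continuous_fst.comp continuous_fst).prodMk continuous_snd)) continuous_snd

private lemma contJ {f : ℝ × ℝ → ℝ} (hf : Continuous f) (a b : ℝ) :
    Continuous fun v : ℝ => ∫ u in a..b, f (u, v) :=
  continuous_parametric_intervalIntegral_of_continuous'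
    (f := fun (v : ℝ) (u : ℝ) => f (u, v))
    (hf.comp (continuous_snd.prodMk continuous_fst)) a b

/-- Second derivative in `y` of the triple primitive of a continuous function. -/
private lemma second_deriv_triple {f : ℝ × ℝ → ℝ} (hf : Continuous f) (a x y : ℝ) :
    iteratedDeriv 2 (fun y' : ℝ => ∫ u in a..x, ∫ t in a..y', ∫ v in a..t, f (u, v)) y
      = ∫ u in a..x, f (u, y) := by
  have hK : Continuous fun q : ℝ × ℝ => ∫ v in a..q.2, f (q.1, v) := contK hf a
  have hH : Continuous fun t : ℝ => ∫ u in a..x, ∫ v in a..t, f (u, v) :=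
    contJ hK a x
  have hJ : Continuous fun v : ℝ => ∫ u in a..x, f (u, v) := contJ hf a x
  have e1 : (fun y' : ℝ => ∫ u in a..x, ∫ t in a..y', ∫ v in a..t, f (u, v))
      = fun y' : ℝ => ∫ t in a..y', ∫ u in a..x, ∫ v in a..t, f (u, v) :=
    funext fun y' => swap_cont hK a x a y'
  have e2 : deriv (fun y' : ℝ => ∫ t in a..y', ∫ u in a..x, ∫ v in a..t, f (u, v))
      = fun y' : ℝ => ∫ u in a..x, ∫ v in a..y', f (u, v) :=
    funext fun y' => Continuous.deriv_integral _ hH a y'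
  have e3 : (fun y' : ℝ => ∫ u in a..x, ∫ v in a..y', f (u, v))
      = fun y' : ℝ => ∫ v in a..y', ∫ u in a..x, f (u, v) :=
    funext fun y' => swap_cont hf a x a y'
  rw [iteratedDeriv_succ, iteratedDeriv_one, e1, e2, e3]
  exact Continuous.deriv_integral _ hJ a y

private lemma deriv_slice_y {G : ℝ × ℝ → ℝ} (hG : Differentiable ℝ G) (x y : ℝ) :
    HasDerivAt (fun y' => G (x, y')) (fderiv ℝ G (x, y) (0, 1)) y := by
  have h1 : HasDerivAt (fun y' : ℝ => ((x, y') : ℝ × ℝ)) ((0 : ℝ), (1 : ℝ)) y :=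
    (hasDerivAt_const y x).prodMk (hasDerivAt_id y)
  exact (hG (x, y)).hasFDerivAt.comp_hasDerivAt y h1

private lemma deriv_slice_x {G : ℝ × ℝ → ℝ} (hG : Differentiable ℝ G) (x y : ℝ) :
    HasDerivAt (fun x' => G (x', y)) (fderiv ℝ G (x, y) (1, 0)) x := by
  have h1 : HasDerivAt (fun x' : ℝ => ((x', y) : ℝ × ℝ)) ((1 : ℝ), (0 : ℝ)) x :=
    (hasDerivAt_id x).prodMk (hasDerivAt_const x y)
  exact (hG (x, y)).hasFDerivAt.comp_hasDerivAt x h1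

/-- Part of Lemma 3.6: the second `y`-derivative of the triple primitive `p` of the
polynomial `p₀` approximates `∂y² g` within `2Mε` on the square `[-M,M]²`. -/
theorem approx_second_partial (M ε : ℝ) (hM : 0 < M) (hε : 0 < ε)
    (g : ℝ × ℝ → ℝ) (hg : ContDiff ℝ 3 g)
    (hsupp : ∀ q : ℝ × ℝ, q ∉ Set.Ioo (-M) M ×ˢ Set.Ioo (-M) M → g q = 0)
    (p₀ : MvPolynomial (Fin 2) ℝ)
    (hp₀ : ∀ q ∈ Set.Icc (-M) M ×ˢ Set.Icc (-M) M,
      |MvPolynomial.eval ![q.1, q.2] p₀ -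
        deriv (fun x : ℝ => iteratedDeriv 2 (fun y : ℝ => g (x, y)) q.2) q.1| < ε) :
    ∀ q ∈ Set.Icc (-M) M ×ˢ Set.Icc (-M) M,
      |iteratedDeriv 2
          (fun y : ℝ => ∫ u in (-M)..q.1, ∫ t in (-M)..y, ∫ v in (-M)..t,
            MvPolynomial.eval ![u, v] p₀) q.2
        - iteratedDeriv 2 (fun y : ℝ => g (q.1, y)) q.2| ≤ 2 * M * ε := by
  have hfcont : Continuous (fun q : ℝ × ℝ => MvPolynomial.eval ![q.1, q.2] p₀) := by
    refine (MvPolynomial.continuous_eval _).comp ?_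
    refine continuous_pi fun i => ?_
    fin_cases i
    · simpa using continuous_fst
    · simpa using continuous_snd
  -- smoothness data for g
  have hgdiff : Differentiable ℝ g := hg.differentiable (by norm_num)
  set G1 : ℝ × ℝ → ℝ := fun q => fderiv ℝ g q (0, 1) with hG1def
  have hG1 : ContDiff ℝ 2 G1 :=
    (hg.fderiv_right (by norm_num)).clm_apply contDiff_const
  set G2 : ℝ × ℝ → ℝ := fun q => fderiv ℝ G1 q (0, 1) with hG2def
  have hG2 : ContDiff ℝ 1 G2 :=
    (hG1.fderiv_right (by norm_num)).clm_apply contDiff_const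
  have hG2diff : Differentiable ℝ G2 := hG2.differentiable one_ne_zero
  -- the second y-derivative of a slice of g is G2
  have hslice2 : ∀ x' y' : ℝ, iteratedDeriv 2 (fun y'' => g (x', y'')) y' = G2 (x', y') := by
    intro x' y'
    rw [iteratedDeriv_succ, iteratedDeriv_one]
    have h1 : deriv (fun y'' => g (x', y'')) = fun y'' => G1 (x', y'') :=
      funext fun y'' => (deriv_slice_y hgdiff x' y'').deriv
    rw [h1]
    exact (deriv_slice_y (hG1.differentiable two_ne_zero) x' y').deriv
  intro q hq
  obtain ⟨x, y⟩ := q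
  have hx : x ∈ Set.Icc (-M) M := hq.1
  have hy : y ∈ Set.Icc (-M) M := hq.2
  simp only at hx hy ⊢
  -- compute the second derivative of the triple primitive
  have hP2 : iteratedDeriv 2
      (fun y' : ℝ => ∫ u in (-M)..x, ∫ t in (-M)..y', ∫ v in (-M)..t,
        MvPolynomial.eval ![u, v] p₀) y
      = ∫ u in (-M)..x, MvPolynomial.eval ![u, y] p₀ :=
    second_deriv_triple hfcont (-M) x y
  -- the derivative appearing in hp₀
  have hfun : ∀ y' : ℝ, (fun x' : ℝ => iteratedDeriv 2 (fun y'' : ℝ => g (x', y'')) y')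
      = fun x' : ℝ => G2 (x', y') := fun y' => funext fun x' => hslice2 x' y'
  have hderiv_eq : ∀ u : ℝ,
      deriv (fun x' : ℝ => iteratedDeriv 2 (fun y'' : ℝ => g (x', y'')) y) u
        = fderiv ℝ G2 (u, y) (1, 0) := by
    intro u
    rw [hfun y]
    exact (deriv_slice_x hG2diff u y).deriv
  -- G2 vanishes on the left edge
  have hzero : G2 (-M, y) = 0 := by
    rw [← hslice2 (-M) y]
    have hconst : (fun y'' : ℝ => g (-M, y'')) = fun _ => (0 : ℝ) := by
      funext y''
      exact hsupp (-M, y'') (by simp)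
    rw [hconst]
    simp [iteratedDeriv_succ, iteratedDeriv_zero]
  -- FTC for G2
  have hDcont : Continuous fun u : ℝ => fderiv ℝ G2 (u, y) (1, 0) := by
    have h0 : ContDiff ℝ 0 (fun q : ℝ × ℝ => fderiv ℝ G2 q (1, 0)) :=
      (hG2.fderiv_right (by norm_num)).clm_apply contDiff_const
    exact h0.continuous.comp (continuous_id.prodMk continuous_const)
  have hFTC : (∫ u in (-M)..x, fderiv ℝ G2 (u, y) (1, 0)) = G2 (x, y) - G2 (-M, y) :=
    intervalIntegral.integral_eq_sub_of_hasDerivAt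
      (fun u _ => deriv_slice_x hG2diff u y) (hDcont.intervalIntegrable _ _)
  have hgrep : iteratedDeriv 2 (fun y'' : ℝ => g (x, y'')) y
      = ∫ u in (-M)..x, fderiv ℝ G2 (u, y) (1, 0) := by
    rw [hslice2 x y, hFTC, hzero, sub_zero]
  have hint1 : IntervalIntegrable (fun u : ℝ => MvPolynomial.eval ![u, y] p₀)
      volume (-M) x :=
    by exact (hfcont.comp (continuous_id.prodMk continuous_const)).intervalIntegrable (-M) x
  rw [hP2, hgrep, ← intervalIntegral.integral_sub hint1 (hDcont.intervalIntegrable _ _)]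
  have hbound : ∀ u ∈ Set.uIoc (-M) x,
      ‖MvPolynomial.eval ![u, y] p₀ - fderiv ℝ G2 (u, y) (1, 0)‖ ≤ ε := by
    intro u hu
    rw [Set.uIoc_of_le hx.1] at hu
    have hu' : u ∈ Set.Icc (-M) M := ⟨le_of_lt hu.1, hu.2.trans hx.2⟩
    have hb := hp₀ (u, y) ⟨hu', hy⟩
    simp only at hb
    rw [hderiv_eq u] at hb
    exact le_of_lt (by simpa [Real.norm_eq_abs] using hb)
  have hle := intervalIntegral.norm_integral_le_of_norm_le_const hbound
  rw [Real.norm_eq_abs] at hle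
  refine hle.trans ?_
  have habs : |x - (-M)| ≤ 2 * M := by
    rw [abs_of_nonneg (by linarith [hx.1])]
    linarith [hx.2]
  calc ε * |x - (-M)| ≤ ε * (2 * M) := by nlinarith [abs_nonneg (x - (-M))]
    _ = 2 * M * ε := by ring
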